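/- Let Z = Y Yᵀ with Y ∈ ℝ^{m×ℓ} of rank ℓ and ℓ2-normalized rows. Then the tangent space of Corr(m,ℓ) at Z, namely {ΔZ + ZΔᵀ : Δ ∈ ℝ^{m×m}, diag(ΔZ) = 0}, equals {ξYᵀ + Yξᵀ : ξ ∈ ℝ^{m×ℓ}, diag(ξYᵀ) = 0}. -/
import Mathlib

open Matrix Real Filter

/-- Rows of `X` are ℓ2-normalized. -/
def RowsNormalized {m k : ℕ} (X : Matrix (Fin m) (Fin k) ℝ) : Prop :=
  ∀ i, ∑ j, X i j ^ 2 = 1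

/-- `O` is an orthogonal matrix. -/
def IsOrth {k : ℕ} (O : Matrix (Fin k) (Fin k) ℝ) : Prop :=
  Oᵀ * O = 1

/-- Spherical product distance on `Π^m S^{k-1}`. -/
noncomputable def dPS {m k : ℕ} (X Y : Matrix (Fin m) (Fin k) ℝ) : ℝ :=
  Real.sqrt (∑ i, (Real.arccos (∑ j, X i j * Y i j)) ^ 2)

/-- Quotient (orbit space) distance on `Π^m S^{k-1} / O(k)`. -/
noncomputable def dOrb {m k : ℕ} (X Y : Matrix (Fin m) (Fin k) ℝ) : ℝ :=
  sInf {d : ℝ | ∃ O : Matrix (Fin k) (Fin k) ℝ, IsOrth O ∧ d = dPS X (Y * O)}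

/-- Characterization of the tangent space of Corr(m,ℓ) at Z = Y Yᵀ. -/
theorem tangent_corr_characterization {m ℓ : ℕ} (Y : Matrix (Fin m) (Fin ℓ) ℝ)
    (hY : RowsNormalized Y) (hrank : Y.rank = ℓ) :
    {V : Matrix (Fin m) (Fin m) ℝ | ∃ Δ : Matrix (Fin m) (Fin m) ℝ,
        (∀ i, (Δ * (Y * Yᵀ)) i i = 0) ∧ V = Δ * (Y * Yᵀ) + (Y * Yᵀ) * Δᵀ} =
    {V : Matrix (Fin m) (Fin m) ℝ | ∃ ξ : Matrix (Fin m) (Fin ℓ) ℝ,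
        (∀ i, (ξ * Yᵀ) i i = 0) ∧ V = ξ * Yᵀ + Y * ξᵀ} := by
  -- Yᵀ * Y is invertible
  have hrk : (Yᵀ * Y).rank = Fintype.card (Fin ℓ) := by
    rw [Matrix.rank_transpose_mul_self, hrank, Fintype.card_fin]
  have hsurj : Function.Surjective (Yᵀ * Y).mulVec := by
    have htop : LinearMap.range (Yᵀ * Y).mulVecLin = ⊤ := by
      apply Submodule.eq_top_of_finrank_eq
      rw [← Matrix.rank]
      simp [hrk]
    intro v
    have := htop ▸ Submodule.mem_top (x := v) (R := ℝ)
    obtain ⟨w, hw⟩ := this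
    exact ⟨w, hw⟩
  have hunit : IsUnit (Yᵀ * Y) := Matrix.mulVec_surjective_iff_isUnit.mp hsurj
  have hdet : IsUnit (Yᵀ * Y).det := (Matrix.isUnit_iff_isUnit_det _).mp hunit
  have hinv : (Yᵀ * Y)⁻¹ * (Yᵀ * Y) = 1 := Matrix.nonsing_inv_mul _ hdet
  have hinv' : (Yᵀ * Y) * (Yᵀ * Y)⁻¹ = 1 := Matrix.mul_nonsing_inv _ hdet
  ext V
  simp only [Set.mem_setOf_eq]
  constructor
  · rintro ⟨Δ, hdiag, rfl⟩
    refine ⟨Δ * Y, ?_, ?_⟩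
    · intro i
      have := hdiag i
      rwa [← Matrix.mul_assoc] at this
    · rw [Matrix.transpose_mul]
      simp only [Matrix.mul_assoc]
  · rintro ⟨ξ, hdiag, rfl⟩
    refine ⟨ξ * (Yᵀ * Y)⁻¹ * Yᵀ, ?_, ?_⟩
    · intro i
      have key : ξ * (Yᵀ * Y)⁻¹ * Yᵀ * (Y * Yᵀ) = ξ * Yᵀ := by
        calc ξ * (Yᵀ * Y)⁻¹ * Yᵀ * (Y * Yᵀ)
            = ξ * ((Yᵀ * Y)⁻¹ * (Yᵀ * Y)) * Yᵀ := by
              simp only [Matrix.mul_assoc]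
          _ = ξ * Yᵀ := by rw [hinv, Matrix.mul_one]
      rw [key]; exact hdiag i
    · have key : ξ * (Yᵀ * Y)⁻¹ * Yᵀ * (Y * Yᵀ) = ξ * Yᵀ := by
        calc ξ * (Yᵀ * Y)⁻¹ * Yᵀ * (Y * Yᵀ)
            = ξ * ((Yᵀ * Y)⁻¹ * (Yᵀ * Y)) * Yᵀ := by
              simp only [Matrix.mul_assoc]
          _ = ξ * Yᵀ := by rw [hinv, Matrix.mul_one]
      have key2 : (Y * Yᵀ) * (ξ * (Yᵀ * Y)⁻¹ * Yᵀ)ᵀ = Y * ξᵀ := by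
        have htr : (ξ * (Yᵀ * Y)⁻¹ * Yᵀ)ᵀ = Y * (Yᵀ * Y)⁻¹ * ξᵀ := by
          rw [Matrix.transpose_mul, Matrix.transpose_mul,
            Matrix.transpose_nonsing_inv, Matrix.transpose_mul,
            Matrix.transpose_transpose, Matrix.mul_assoc]
        rw [htr]
        calc (Y * Yᵀ) * (Y * (Yᵀ * Y)⁻¹ * ξᵀ)
            = Y * ((Yᵀ * Y) * (Yᵀ * Y)⁻¹) * ξᵀ := by
              simp only [Matrix.mul_assoc]
          _ = Y * ξᵀ := by rw [hinv', Matrix.mul_one]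
      rw [key, key2]
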